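/- Let φ be an integer-valued valuation on compact convex subsets of ℝ^d that is σ-continuous at singletons, i.e., φ(K_n) → φ({x}) whenever compact convex K_n decrease to {x}. Then φ is σ-continuous at every compact convex K: φ(K_n) → φ(K) whenever K_n decrease to K. -/

import Mathlib

open Filter Set

namespace SigmaContAux

variable {d : ℕ}

local notation "Euc" => EuclideanSpace ℝ (Fin d)

lemma cont_eval (i : Fin d) : Continuous fun y : EuclideanSpace ℝ (Fin d) => y i :=
  (EuclideanSpace.proj i).continuous

lemma lin_eval (i : Fin d) : IsLinearMap ℝ fun y : EuclideanSpace ℝ (Fin d) => y i :=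
  ⟨fun a b => rfl, fun c a => rfl⟩

variable (φ : Set (EuclideanSpace ℝ (Fin d)) → ℝ)

/-- Integer-valued convergence means eventual equality. -/
lemma int_eventually_eq (hint : ∀ K : Set (EuclideanSpace ℝ (Fin d)), ∃ m : ℤ, φ K = m)
    {A : ℕ → Set (EuclideanSpace ℝ (Fin d))} {M : Set (EuclideanSpace ℝ (Fin d))}
    (h : Tendsto (fun n => φ (A n)) atTop (nhds (φ M))) :
    ∀ᶠ n in atTop, φ (A n) = φ M := by
  obtain ⟨m, hm⟩ := hint M
  have h2 := h.eventually (Metric.ball_mem_nhds (φ M) (by norm_num : (0:ℝ) < 1/2))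
  filter_upwards [h2] with n hn
  obtain ⟨a, ha⟩ := hint (A n)
  rw [ha, hm] at hn ⊢
  rw [Real.dist_eq] at hn
  norm_cast
  by_contra hne
  have h1 : (1:ℤ) ≤ |a - m| := Int.one_le_abs (sub_ne_zero.mpr hne)
  have : (1:ℝ) ≤ |(a:ℝ) - m| := by exact_mod_cast (by push_cast at h1 ⊢; exact_mod_cast h1 : (1:ℝ) ≤ |((a - m : ℤ) : ℝ)|)
  linarith

lemma iInter_subseq {α : Type*} {A : ℕ → Set α} (hdec : ∀ n, A (n+1) ⊆ A n)
    {σ : ℕ → ℕ} (hσ : StrictMono σ) : ⋂ n, A (σ n) = ⋂ n, A n := by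
  have hA : Antitone A := antitone_nat_of_succ_le hdec
  apply subset_antisymm
  · intro y hy
    refine mem_iInter.2 fun m => hA hσ.le_apply (mem_iInter.1 hy m)
  · exact fun y hy => mem_iInter.2 fun n => mem_iInter.1 hy (σ n)

noncomputable def lo (i : Fin d) (S : Set (EuclideanSpace ℝ (Fin d))) : ℝ :=
  sInf ((fun y => y i) '' S)

noncomputable def hi (i : Fin d) (S : Set (EuclideanSpace ℝ (Fin d))) : ℝ :=
  sSup ((fun y => y i) '' S)

lemma lo_le {i : Fin d} {S : Set (EuclideanSpace ℝ (Fin d))} (hS : IsCompact S)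
    {y : EuclideanSpace ℝ (Fin d)} (hy : y ∈ S) : lo i S ≤ y i :=
  csInf_le (hS.image (cont_eval i)).bddBelow (mem_image_of_mem _ hy)

lemma le_hi {i : Fin d} {S : Set (EuclideanSpace ℝ (Fin d))} (hS : IsCompact S)
    {y : EuclideanSpace ℝ (Fin d)} (hy : y ∈ S) : y i ≤ hi i S :=
  le_csSup (hS.image (cont_eval i)).bddAbove (mem_image_of_mem _ hy)

lemma exists_lo {i : Fin d} {S : Set (EuclideanSpace ℝ (Fin d))} (hS : IsCompact S)
    (hne : S.Nonempty) : ∃ a ∈ S, a i = lo i S := by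
  have := (hS.image (cont_eval i)).sInf_mem (hne.image _)
  obtain ⟨a, ha, ha'⟩ := this
  exact ⟨a, ha, ha'⟩

lemma exists_hi {i : Fin d} {S : Set (EuclideanSpace ℝ (Fin d))} (hS : IsCompact S)
    (hne : S.Nonempty) : ∃ a ∈ S, a i = hi i S := by
  have := (hS.image (cont_eval i)).sSup_mem (hne.image _)
  obtain ⟨a, ha, ha'⟩ := this
  exact ⟨a, ha, ha'⟩

lemma lo_le_hi {i : Fin d} {S : Set (EuclideanSpace ℝ (Fin d))} (hS : IsCompact S)
    (hne : S.Nonempty) : lo i S ≤ hi i S := by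
  obtain ⟨a, ha⟩ := hne
  exact (lo_le hS ha).trans (le_hi hS ha)

lemma ext_mono {i : Fin d} {S T : Set (EuclideanSpace ℝ (Fin d))} (hT : IsCompact T)
    (hST : S ⊆ T) (hS : S.Nonempty) : hi i S - lo i S ≤ hi i T - lo i T := by
  have h1 : hi i S ≤ hi i T :=
    csSup_le_csSup (hT.image (cont_eval i)).bddAbove (hS.image _) (image_mono hST)
  have h2 : lo i T ≤ lo i S :=
    csInf_le_csInf (hT.image (cont_eval i)).bddBelow (hS.image _) (image_mono hST)
  linarith

/-- A "failing stage": a decreasing sequence of compact convex sets whose φ-values all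
differ from the φ-value of the (nonempty) limit. -/
structure St : Type where
  A : ℕ → Set (EuclideanSpace ℝ (Fin d))
  M : Set (EuclideanSpace ℝ (Fin d))
  hcomp : ∀ n, IsCompact (A n)
  hconv : ∀ n, Convex ℝ (A n)
  hdec : ∀ n, A (n+1) ⊆ A n
  hlim : (⋂ n, A n) = M
  hMne : M.Nonempty
  hfail : ∀ n, φ (A n) ≠ φ M

variable {φ}

lemma St.Mcomp (s : St φ) : IsCompact s.M := by
  rw [← s.hlim]
  exact (s.hcomp 0).of_isClosed_subset
    (isClosed_iInter fun n => (s.hcomp n).isClosed) (iInter_subset _ 0)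

lemma St.Mconv (s : St φ) : Convex ℝ s.M := by
  rw [← s.hlim]; exact convex_iInter fun n => s.hconv n

lemma St.MsubA (s : St φ) (n : ℕ) : s.M ⊆ s.A n := by
  rw [← s.hlim]; exact iInter_subset _ n

/-- Restrict a stage to a closed convex set along a failing subsequence. -/
lemma St.restrict (s : St φ) {C : Set (EuclideanSpace ℝ (Fin d))}
    (hCcl : IsClosed C) (hCcv : Convex ℝ C) (hne : (s.M ∩ C).Nonempty)
    (hfr : ∃ᶠ n in atTop, φ (s.A n ∩ C) ≠ φ (s.M ∩ C)) :
    ∃ t : St φ, (∀ n, t.A n ⊆ s.A n) ∧ t.M = s.M ∩ C := by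
  obtain ⟨σ, hσ, hσp⟩ := extraction_of_frequently_atTop hfr
  have hAnt : Antitone s.A := antitone_nat_of_succ_le s.hdec
  refine ⟨⟨fun n => s.A (σ n) ∩ C, s.M ∩ C,
    fun n => (s.hcomp _).inter_right hCcl,
    fun n => (s.hconv _).inter hCcv,
    fun n => inter_subset_inter_left _ (hAnt (hσ.monotone (Nat.le_succ n))),
    ?_, hne, hσp⟩, fun n => (inter_subset_left).trans (hAnt (hσ.le_apply)), rfl⟩
  have : (⋂ n, s.A (σ n) ∩ C) = (⋂ n, s.A (σ n)) ∩ C := by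
    rw [iInter_inter]
  rw [this, iInter_subseq s.hdec hσ, s.hlim]

/-- The key step: cut a failing stage by a coordinate hyperplane at the midpoint,
obtaining a new failing stage whose limit has halved extent in that coordinate. -/
lemma St.step
    (hadd : ∀ K L : Set (EuclideanSpace ℝ (Fin d)),
      IsCompact K → Convex ℝ K → IsCompact L → Convex ℝ L → Convex ℝ (K ∪ L) →
      φ (K ∪ L) + φ (K ∩ L) = φ K + φ L)
    (s : St φ) (i : Fin d) :
    ∃ t : St φ, (∀ n, t.A n ⊆ s.A n) ∧ t.M ⊆ s.M ∧
      hi i t.M - lo i t.M ≤ (hi i s.M - lo i s.M) / 2 := by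
  classical
  set c : ℝ := (lo i s.M + hi i s.M) / 2 with hc
  set Cle : Set (EuclideanSpace ℝ (Fin d)) := {y | y i ≤ c} with hCle
  set Cge : Set (EuclideanSpace ℝ (Fin d)) := {y | c ≤ y i} with hCge
  set Ceq : Set (EuclideanSpace ℝ (Fin d)) := {y | y i = c} with hCeq
  have hle_cl : IsClosed Cle := isClosed_le (cont_eval i) continuous_const
  have hge_cl : IsClosed Cge := isClosed_le continuous_const (cont_eval i)
  have heq_cl : IsClosed Ceq := isClosed_eq (cont_eval i) continuous_const
  have hle_cv : Convex ℝ Cle := convex_halfSpace_le (lin_eval i) c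
  have hge_cv : Convex ℝ Cge := convex_halfSpace_ge (lin_eval i) c
  have heq_cv : Convex ℝ Ceq := convex_hyperplane (lin_eval i) c
  have hloc : lo i s.M ≤ c := by
    have := lo_le_hi s.Mcomp s.hMne (i := i); rw [hc]; linarith
  have hchi : c ≤ hi i s.M := by
    have := lo_le_hi s.Mcomp s.hMne (i := i); rw [hc]; linarith
  -- nonemptiness of the three limit pieces
  obtain ⟨a, haM, ha⟩ := exists_lo s.Mcomp s.hMne (i := i)
  obtain ⟨b, hbM, hb⟩ := exists_hi s.Mcomp s.hMne (i := i)
  have hneLe : (s.M ∩ Cle).Nonempty := ⟨a, haM, by simp only [hCle, mem_setOf_eq, ha]; exact hloc⟩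
  have hneGe : (s.M ∩ Cge).Nonempty := ⟨b, hbM, by simp only [hCge, mem_setOf_eq, hb]; exact hchi⟩
  have hneEq : (s.M ∩ Ceq).Nonempty := by
    have hIcc : c ∈ Icc (a i) (b i) := by rw [ha, hb]; exact ⟨hloc, hchi⟩
    have := s.Mconv.isPreconnected.intermediate_value haM hbM
      ((cont_eval i).continuousOn)
    obtain ⟨z, hzM, hz⟩ := this hIcc
    exact ⟨z, hzM, hz⟩
  -- the cut identity
  have cutid : ∀ (A : Set (EuclideanSpace ℝ (Fin d))), IsCompact A → Convex ℝ A →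
      φ A + φ (A ∩ Ceq) = φ (A ∩ Cle) + φ (A ∩ Cge) := by
    intro A hAc hAv
    have hunion : (A ∩ Cle) ∪ (A ∩ Cge) = A := by
      ext y
      constructor
      · rintro (⟨h, _⟩ | ⟨h, _⟩) <;> exact h
      · intro h
        rcases le_total (y i) c with h' | h'
        · exact Or.inl ⟨h, h'⟩
        · exact Or.inr ⟨h, h'⟩
    have hinter : (A ∩ Cle) ∩ (A ∩ Cge) = A ∩ Ceq := by
      ext y
      constructor
      · rintro ⟨⟨h, h1⟩, ⟨_, h2⟩⟩; exact ⟨h, le_antisymm h1 h2⟩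
      · rintro ⟨h, h1⟩; exact ⟨⟨h, le_of_eq h1⟩, ⟨h, ge_of_eq h1⟩⟩
    have := hadd (A ∩ Cle) (A ∩ Cge) (hAc.inter_right hle_cl) (hAv.inter hle_cv)
      (hAc.inter_right hge_cl) (hAv.inter hge_cv) (by rw [hunion]; exact hAv)
    rw [hunion, hinter] at this
    linarith
  -- one of the three pieces fails frequently
  have h3 : (∃ᶠ n in atTop, φ (s.A n ∩ Cle) ≠ φ (s.M ∩ Cle)) ∨
      (∃ᶠ n in atTop, φ (s.A n ∩ Cge) ≠ φ (s.M ∩ Cge)) ∨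
      (∃ᶠ n in atTop, φ (s.A n ∩ Ceq) ≠ φ (s.M ∩ Ceq)) := by
    by_contra h
    push_neg at h
    obtain ⟨h1, h2, h3⟩ := h
    obtain ⟨n, hn1, hn2, hn3⟩ := (h1.and (h2.and h3)).exists
    have e1 := cutid (s.A n) (s.hcomp n) (s.hconv n)
    have e2 := cutid s.M s.Mcomp s.Mconv
    exact s.hfail n (by linarith)
  -- extent bounds for each candidate
  have bndLe : hi i (s.M ∩ Cle) - lo i (s.M ∩ Cle) ≤ (hi i s.M - lo i s.M) / 2 := by
    have hcm : IsCompact (s.M ∩ Cle) := s.Mcomp.inter_right hle_cl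
    have h1 : hi i (s.M ∩ Cle) ≤ c := by
      apply csSup_le (hneLe.image _)
      rintro x ⟨y, ⟨_, hy⟩, rfl⟩; exact hy
    have h2 : lo i s.M ≤ lo i (s.M ∩ Cle) :=
      csInf_le_csInf (s.Mcomp.image (cont_eval i)).bddBelow (hneLe.image _) (image_mono inter_subset_left)
    rw [hc] at h1
    linarith
  have bndGe : hi i (s.M ∩ Cge) - lo i (s.M ∩ Cge) ≤ (hi i s.M - lo i s.M) / 2 := by
    have h1 : c ≤ lo i (s.M ∩ Cge) := by
      apply le_csInf (hneGe.image _)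
      rintro x ⟨y, ⟨_, hy⟩, rfl⟩; exact hy
    have h2 : hi i (s.M ∩ Cge) ≤ hi i s.M :=
      csSup_le_csSup (s.Mcomp.image (cont_eval i)).bddAbove (hneGe.image _)
        (image_mono inter_subset_left)
    rw [hc] at h1
    linarith
  have bndEq : hi i (s.M ∩ Ceq) - lo i (s.M ∩ Ceq) ≤ (hi i s.M - lo i s.M) / 2 := by
    have h1 : hi i (s.M ∩ Ceq) ≤ c := by
      apply csSup_le (hneEq.image _)
      rintro x ⟨y, ⟨_, hy⟩, rfl⟩; exact le_of_eq hy
    have h2 : c ≤ lo i (s.M ∩ Ceq) := by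
      apply le_csInf (hneEq.image _)
      rintro x ⟨y, ⟨_, hy⟩, rfl⟩; exact ge_of_eq hy
    have h3 : lo i s.M ≤ hi i s.M := lo_le_hi s.Mcomp s.hMne
    linarith
  rcases h3 with hf | hf | hf
  · obtain ⟨t, ht1, ht2⟩ := s.restrict hle_cl hle_cv hneLe hf
    exact ⟨t, ht1, ht2 ▸ inter_subset_left, ht2 ▸ bndLe⟩
  · obtain ⟨t, ht1, ht2⟩ := s.restrict hge_cl hge_cv hneGe hf
    exact ⟨t, ht1, ht2 ▸ inter_subset_left, ht2 ▸ bndGe⟩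
  · obtain ⟨t, ht1, ht2⟩ := s.restrict heq_cl heq_cv hneEq hf
    exact ⟨t, ht1, ht2 ▸ inter_subset_left, ht2 ▸ bndEq⟩


/-- No failing stage can exist. -/
lemma no_st (hd : 0 < d)
    (hint : ∀ K : Set (EuclideanSpace ℝ (Fin d)), ∃ m : ℤ, φ K = m)
    (hadd : ∀ K L : Set (EuclideanSpace ℝ (Fin d)),
      IsCompact K → Convex ℝ K → IsCompact L → Convex ℝ L → Convex ℝ (K ∪ L) →
      φ (K ∪ L) + φ (K ∩ L) = φ K + φ L)
    (hsc_single : ∀ (K : ℕ → Set (EuclideanSpace ℝ (Fin d))) (x : EuclideanSpace ℝ (Fin d)),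
      (∀ n, IsCompact (K n)) → (∀ n, Convex ℝ (K n)) → (∀ n, K (n + 1) ⊆ K n) →
      (⋂ n, K n) = {x} →
      Tendsto (fun n => φ (K n)) atTop (nhds (φ {x})))
    (s0 : St φ) : False := by
  classical
  set T : ℕ → St φ :=
    fun k => Nat.rec s0 (fun k t => (t.step hadd ⟨k % d, Nat.mod_lt k hd⟩).choose) k with hT
  have hspec : ∀ k, (∀ n, (T (k+1)).A n ⊆ (T k).A n) ∧ (T (k+1)).M ⊆ (T k).M ∧
      hi ⟨k % d, Nat.mod_lt k hd⟩ (T (k+1)).M - lo ⟨k % d, Nat.mod_lt k hd⟩ (T (k+1)).M ≤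
        (hi ⟨k % d, Nat.mod_lt k hd⟩ (T k).M - lo ⟨k % d, Nat.mod_lt k hd⟩ (T k).M) / 2 :=
    fun k => ((T k).step hadd ⟨k % d, Nat.mod_lt k hd⟩).choose_spec
  have hAchain : ∀ k l, k ≤ l → ∀ n, (T l).A n ⊆ (T k).A n := by
    intro k l hkl
    induction l, hkl using Nat.le_induction with
    | base => exact fun n => subset_rfl
    | succ l hkl ih => exact fun n => ((hspec l).1 n).trans (ih n)
  have hMchain : ∀ k l, k ≤ l → (T l).M ⊆ (T k).M := by
    intro k l hkl
    induction l, hkl using Nat.le_induction with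
    | base => exact subset_rfl
    | succ l hkl ih => exact ((hspec l).2.1).trans ih
  -- the intersection of the limits is nonempty
  obtain ⟨x, hx⟩ : (⋂ k, (T k).M).Nonempty :=
    IsCompact.nonempty_iInter_of_sequence_nonempty_isCompact_isClosed (fun k => (T k).M)
      (fun k => (hspec k).2.1) (fun k => (T k).hMne) (T 0).Mcomp
      (fun k => (T k).Mcomp.isClosed)
  -- extent controls
  set e : Fin d → ℕ → ℝ := fun j k => hi j (T k).M - lo j (T k).M with he
  have hemono : ∀ j k l, k ≤ l → e j l ≤ e j k := fun j k l hkl =>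
    ext_mono (T k).Mcomp (hMchain k l hkl) (T l).hMne
  have hehalf : ∀ (j : Fin d) (m : ℕ), e j (d*(m+1)) ≤ e j (d*m) / 2 := by
    intro j m
    have hk : (d*m + j.val) % d = j.val := by
      rw [Nat.mul_add_mod]
      exact Nat.mod_eq_of_lt j.isLt
    have h1 : e j (d*m + j.val + 1) ≤ e j (d*m + j.val) / 2 := by
      have := (hspec (d*m + j.val)).2.2
      have hj : (⟨(d*m + j.val) % d, Nat.mod_lt _ hd⟩ : Fin d) = j := Fin.ext hk
      rwa [hj] at this
    have h2 : e j (d*m + j.val) ≤ e j (d*m) := hemono j _ _ (Nat.le_add_right _ _)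
    have h3 : e j (d*(m+1)) ≤ e j (d*m + j.val + 1) := by
      exact hemono j (d*m + j.val + 1) (d*(m+1))
        (by rw [Nat.mul_succ, Nat.add_assoc]; exact Nat.add_le_add_left j.isLt _)
    calc e j (d*(m+1)) ≤ e j (d*m + j.val + 1) := h3
      _ ≤ e j (d*m + j.val) / 2 := h1
      _ ≤ e j (d*m) / 2 := by gcongr
  have hepow : ∀ (j : Fin d) (m : ℕ), e j (d*m) ≤ e j 0 / 2^m := by
    intro j m
    induction m with
    | zero => simpa using hemono j 0 (d*0) (Nat.zero_le _)
    | succ m ih =>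
      have := hehalf j m
      have h2 : (0:ℝ) < 2^m := by positivity
      calc e j (d*(m+1)) ≤ e j (d*m) / 2 := this
        _ ≤ (e j 0 / 2^m) / 2 := by linarith
        _ = e j 0 / 2^(m+1) := by rw [pow_succ]; ring
  -- the limits shrink to the single point x
  have hMsing : (⋂ k, (T k).M) = {x} := by
    apply subset_antisymm _ (singleton_subset_iff.2 hx)
    intro y hy
    have hcoord : ∀ j : Fin d, y j = x j := by
      intro j
      by_contra hne
      set v : ℝ := |y j - x j| with hv
      have hvpos : 0 < v := abs_pos.2 (sub_ne_zero.2 hne)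
      obtain ⟨m, hm⟩ := pow_unbounded_of_one_lt (e j 0 / v) (one_lt_two (α := ℝ))
      have hvk : v ≤ e j (d*m) := by
        have hyk : y ∈ (T (d*m)).M := mem_iInter.1 hy _
        have hxk : x ∈ (T (d*m)).M := mem_iInter.1 hx _
        have h1 := le_hi (T (d*m)).Mcomp hyk (i := j)
        have h2 := lo_le (T (d*m)).Mcomp hyk (i := j)
        have h3 := le_hi (T (d*m)).Mcomp hxk (i := j)
        have h4 := lo_le (T (d*m)).Mcomp hxk (i := j)
        rw [hv, abs_sub_le_iff]
        constructor <;> [skip; skip] <;> · simp only [he]; linarith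
      have h2m : (0:ℝ) < 2^m := by positivity
      have hlt : e j 0 < 2^m * v := by
        rw [div_lt_iff₀ hvpos] at hm; linarith
      have hle : 2^m * v ≤ e j 0 := by
        have := (hepow j m)
        have : v ≤ e j 0 / 2^m := hvk.trans this
        rw [le_div_iff₀ h2m] at this; linarith
      linarith
    refine (PiLp.ext fun j => ?_ : y = x)
    exact hcoord j
  -- the diagonal sequence
  set D : ℕ → Set (EuclideanSpace ℝ (Fin d)) := fun k => (T k).A k with hD
  have hDdec : ∀ k, D (k+1) ⊆ D k := fun k =>
    ((hspec k).1 (k+1)).trans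
      ((antitone_nat_of_succ_le (T k).hdec) (Nat.le_succ k))
  have hDsing : (⋂ k, D k) = {x} := by
    apply subset_antisymm
    · intro y hy
      have hyM : ∀ k, y ∈ (T k).M := by
        intro k
        rw [← (T k).hlim]
        refine mem_iInter.2 fun n => ?_
        have h1 : y ∈ D (max k n) := mem_iInter.1 hy _
        have h2 : (T (max k n)).A (max k n) ⊆ (T k).A (max k n) :=
          hAchain k _ (le_max_left _ _) _
        have h3 : (T k).A (max k n) ⊆ (T k).A n :=
          (antitone_nat_of_succ_le (T k).hdec) (le_max_right _ _)
        exact h3 (h2 h1)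
      have : y ∈ ⋂ k, (T k).M := mem_iInter.2 hyM
      rwa [hMsing] at this
    · refine singleton_subset_iff.2 (mem_iInter.2 fun k => ?_)
      exact (T k).MsubA k (mem_iInter.1 (hMsing ▸ (rfl : x ∈ ({x} : Set _)) : x ∈ ⋂ k, (T k).M) k)
  -- contradiction via σ-continuity at the point x
  have hDt := hsc_single D x (fun k => (T k).hcomp k) (fun k => (T k).hconv k) hDdec hDsing
  have hMt := hsc_single (fun k => (T k).M) x (fun k => (T k).Mcomp) (fun k => (T k).Mconv)
    (fun k => (hspec k).2.1) hMsing
  have hDe := int_eventually_eq φ hint hDt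
  have hMe := int_eventually_eq φ hint hMt
  obtain ⟨k, hk1, hk2⟩ := (hDe.and hMe).exists
  exact (T k).hfail k (by rw [hk1, hk2])

end SigmaContAux

/-- An integer-valued valuation on compact convex subsets of ℝ^d that is σ-continuous at
singletons is σ-continuous at every compact convex set. -/
theorem sigma_continuity_from_singletons (d : ℕ)
    (φ : Set (EuclideanSpace ℝ (Fin d)) → ℝ)
    (hint : ∀ K : Set (EuclideanSpace ℝ (Fin d)), ∃ m : ℤ, φ K = m)
    (hempty : φ ∅ = 0)
    (hadd : ∀ K L : Set (EuclideanSpace ℝ (Fin d)),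
      IsCompact K → Convex ℝ K → IsCompact L → Convex ℝ L → Convex ℝ (K ∪ L) →
      φ (K ∪ L) + φ (K ∩ L) = φ K + φ L)
    (hsc_single : ∀ (K : ℕ → Set (EuclideanSpace ℝ (Fin d))) (x : EuclideanSpace ℝ (Fin d)),
      (∀ n, IsCompact (K n)) → (∀ n, Convex ℝ (K n)) → (∀ n, K (n + 1) ⊆ K n) →
      (⋂ n, K n) = {x} →
      Tendsto (fun n => φ (K n)) atTop (nhds (φ {x}))) :
    ∀ (K : ℕ → Set (EuclideanSpace ℝ (Fin d))) (L : Set (EuclideanSpace ℝ (Fin d))),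
      (∀ n, IsCompact (K n)) → (∀ n, Convex ℝ (K n)) → (∀ n, K (n + 1) ⊆ K n) →
      IsCompact L → Convex ℝ L → (⋂ n, K n) = L →
      Tendsto (fun n => φ (K n)) atTop (nhds (φ L)) := by
  classical
  intro K L hKc hKv hKd hLc hLv hKL
  by_cases hL : L.Nonempty
  · rcases Nat.eq_zero_or_pos d with hd0 | hd
    · -- degenerate case: the space is a subsingleton, so K n = L for every n
      have hss : ∀ y z : EuclideanSpace ℝ (Fin d), y = z := by
        subst hd0
        intro y z
        refine PiLp.ext fun i => ?_
        exact absurd i.isLt (by omega)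
      obtain ⟨x, hx⟩ := hL
      have hKeq : ∀ n, K n = L := by
        intro n
        apply Set.Subset.antisymm
        · intro y hy
          rwa [hss y x]
        · rw [← hKL]; exact Set.iInter_subset _ n
      have : (fun n => φ (K n)) = fun _ => φ L := funext fun n => by rw [hKeq n]
      rw [this]
      exact tendsto_const_nhds
    · by_contra hT
      have hfr : ∃ᶠ n in atTop, φ (K n) ≠ φ L := by
        by_contra h
        rw [Filter.not_frequently] at h
        simp only [not_not] at h
        exact hT ((tendsto_const_nhds : Filter.Tendsto (fun _ : ℕ => φ L) Filter.atTop (nhds (φ L))).congr'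
          (h.mono fun n hn => hn.symm))
      obtain ⟨σ, hσ, hσp⟩ := Filter.extraction_of_frequently_atTop hfr
      have hAnt : Antitone K := antitone_nat_of_succ_le hKd
      have s0 : SigmaContAux.St φ :=
        ⟨fun n => K (σ n), L, fun n => hKc _, fun n => hKv _,
          fun n => hAnt (hσ.monotone (Nat.le_succ n)),
          by rw [SigmaContAux.iInter_subseq hKd hσ, hKL], hL, hσp⟩
      exact absurd (SigmaContAux.no_st hd hint hadd hsc_single s0) not_false
  · -- empty limit: the sets are eventually empty
    have hLe : L = ∅ := Set.not_nonempty_iff_eq_empty.1 hL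
    obtain ⟨N, hN⟩ : ∃ N, K N = ∅ := by
      by_contra h
      push_neg at h
      have := IsCompact.nonempty_iInter_of_sequence_nonempty_isCompact_isClosed K hKd
        h (hKc 0) (fun n => (hKc n).isClosed)
      rw [hKL, hLe] at this
      exact Set.not_nonempty_empty this
    have hAnt : Antitone K := antitone_nat_of_succ_le hKd
    have hev : ∀ᶠ n in atTop, φ (K n) = φ L := by
      rw [Filter.eventually_atTop]
      refine ⟨N, fun n hn => ?_⟩
      have : K n = ∅ := Set.subset_eq_empty (hN ▸ hAnt hn) rfl
      rw [this, hLe]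
    exact (tendsto_const_nhds : Filter.Tendsto (fun _ : ℕ => φ L) Filter.atTop (nhds (φ L))).congr' (hev.mono fun n hn => hn.symm)
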